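/- For t ∈ [0, π/2] \ {π/4}, the linear map φ_t on ℝⁿ×ℝⁿ given by φ_t(x,y) = (σx + τy, τx + σy) satisfies: for t < π/4, φ_t*g₀ = (a suitable positive multiple of) g_t, i.e., g_t(v,w) = c_t · g₀(φ_t v, φ_t w) for all v,w, where g_t = cos t · 2dxdy + sin t · δ₀ and c_t is a positive constant; moreover φ_t commutes with the standard symplectic form up to a positive factor, hence maps Lagrangian planes to Lagrangian planes. -/
import Mathlib


open Real

/-- For `t ∈ [0, π/4)`, the map `φ_t(x,y) = (σx + τy, τx + σy)` pulls back the
pseudo-Euclidean metric `g₀ = 2dxdy` to a positive multiple of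
`g_t = cos t · 2dxdy + sin t · δ₀`; moreover `φ_t` scales the standard symplectic form by a
positive factor, hence maps isotropic (Lagrangian) directions to isotropic directions. -/
theorem stmt16 (n : ℕ) (t : ℝ) (ht : t ∈ Set.Ico 0 (π / 4))
    (σ τ : ℝ)
    (hσ : σ = (Real.sqrt (Real.cos t + Real.sin t) + Real.sqrt |Real.cos t - Real.sin t|) / 2)
    (hτ : τ = (Real.sqrt (Real.cos t + Real.sin t) - Real.sqrt |Real.cos t - Real.sin t|) / 2)
    (φ : (Fin n → ℝ) × (Fin n → ℝ) → (Fin n → ℝ) × (Fin n → ℝ))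
    (hφ : ∀ v, φ v = (fun i => σ * v.1 i + τ * v.2 i, fun i => τ * v.1 i + σ * v.2 i))
    (g0 δ0 gt ω : ((Fin n → ℝ) × (Fin n → ℝ)) → ((Fin n → ℝ) × (Fin n → ℝ)) → ℝ)
    (hg0 : ∀ v w, g0 v w = (∑ i, v.1 i * w.2 i) + (∑ i, w.1 i * v.2 i))
    (hδ0 : ∀ v w, δ0 v w = (∑ i, v.1 i * w.1 i) + (∑ i, v.2 i * w.2 i))
    (hgt : ∀ v w, gt v w = Real.cos t * g0 v w + Real.sin t * δ0 v w)
    (hω : ∀ v w, ω v w = (∑ i, v.1 i * w.2 i) - (∑ i, w.1 i * v.2 i)) :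
    (∃ c : ℝ, 0 < c ∧ ∀ v w, gt v w = c * g0 (φ v) (φ w)) ∧
      (∃ d : ℝ, 0 < d ∧ ∀ v w, ω (φ v) (φ w) = d * ω v w) ∧
      (∀ v w, ω v w = 0 → ω (φ v) (φ w) = 0) := by
  obtain ⟨ht0, ht1⟩ := ht
  have hπ : (π / 4 : ℝ) ≤ π / 2 := by
    have := Real.pi_pos; linarith
  -- sin t < cos t
  have hsc : Real.sin t < Real.cos t := by
    have h1 : Real.cos t = Real.sin (π / 2 - t) := (Real.sin_pi_div_two_sub t).symm
    rw [h1]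
    apply Real.strictMonoOn_sin (by constructor <;> nlinarith [Real.pi_pos])
      (by constructor <;> nlinarith [Real.pi_pos]) (by linarith)
  have hsin0 : 0 ≤ Real.sin t := Real.sin_nonneg_of_nonneg_of_le_pi ht0 (by nlinarith [Real.pi_pos])
  have hcos0 : 0 < Real.cos t := lt_of_le_of_lt hsin0 hsc
  set A := Real.cos t + Real.sin t with hA
  set B := Real.cos t - Real.sin t with hB
  have hApos : 0 < A := by positivity
  have hBpos : 0 < B := by simp [hB]; linarith
  have habs : |Real.cos t - Real.sin t| = B := abs_of_pos hBpos
  rw [habs] at hσ hτ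
  have hsA : Real.sqrt A * Real.sqrt A = A := Real.mul_self_sqrt hApos.le
  have hsB : Real.sqrt B * Real.sqrt B = B := Real.mul_self_sqrt hBpos.le
  have h1 : σ ^ 2 + τ ^ 2 = Real.cos t := by
    rw [hσ, hτ]; nlinarith [hsA, hsB]
  have h2 : 2 * (σ * τ) = Real.sin t := by
    rw [hσ, hτ]; nlinarith [hsA, hsB]
  have hd : 0 < σ ^ 2 - τ ^ 2 := by
    have : σ ^ 2 - τ ^ 2 = Real.sqrt A * Real.sqrt B := by rw [hσ, hτ]; ring
    rw [this]
    positivity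
  have key : ∀ (a b c d : Fin n → ℝ),
      ∑ i, (σ * a i + τ * b i) * (τ * c i + σ * d i)
        = σ * τ * (∑ i, a i * c i) + σ ^ 2 * (∑ i, a i * d i)
          + τ ^ 2 * (∑ i, b i * c i) + σ * τ * (∑ i, b i * d i) := by
    intro a b c d
    rw [Finset.mul_sum, Finset.mul_sum, Finset.mul_sum, Finset.mul_sum,
      ← Finset.sum_add_distrib, ← Finset.sum_add_distrib, ← Finset.sum_add_distrib]
    exact Finset.sum_congr rfl fun i _ => by ring
  have comm : ∀ (a b : Fin n → ℝ), ∑ i, a i * b i = ∑ i, b i * a i := fun a b =>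
    Finset.sum_congr rfl fun i _ => mul_comm _ _
  have hωscale : ∀ v w, ω (φ v) (φ w) = (σ ^ 2 - τ ^ 2) * ω v w := by
    intro v w
    rw [hω, hω, hφ, hφ]
    simp only
    rw [key v.1 v.2 w.1 w.2, key w.1 w.2 v.1 v.2,
      comm w.1 v.1, comm w.1 v.2, comm w.2 v.1, comm w.2 v.2]
    ring
  refine ⟨⟨1, one_pos, fun v w => ?_⟩, ⟨σ ^ 2 - τ ^ 2, hd, hωscale⟩,
    fun v w h => by rw [hωscale, h, mul_zero]⟩
  rw [hgt, hg0, hg0, hδ0, hφ, hφ]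
  simp only
  rw [key v.1 v.2 w.1 w.2, key w.1 w.2 v.1 v.2,
    comm w.1 v.1, comm w.1 v.2, comm w.2 v.1, comm w.2 v.2]
  rw [← h1, ← h2]
  ring
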